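/- Let q : ℝ^n → ℝ^n / A_V^T ℝ^d be the quotient map of real vector spaces, let G = ℤ^n / A_V^T ℤ^d, and let T be the torsion subgroup of G. Then: (1) a coset α = a + A_V^T ℤ^d ∈ G is conic if and only if q(a) lies in q([0,1)^n); (2) the set of conic cosets in G is finite, the set q([0,1)^n) ∩ q(ℤ^n) is finite, and the number of conic cosets equals #(q([0,1)^n) ∩ q(ℤ^n)) · #T. (This is the concrete form of the bijection between isomorphism classes of conic divisorial ideals of the toric ring R = k[C^∨(V) ∩ ℤ^d] and (W(B) ∩ Cl(R)_fre) × Cl(R)_tor.) -/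

import Mathlib

open Matrix

/-- The real vector obtained from an integer vector by coordinatewise casting. -/
noncomputable def rVec {d : ℕ} (v : Fin d → ℤ) : Fin d → ℝ := fun j => (v j : ℝ)

/-- The cone `C(V)` generated by the vectors `V i` (viewed in `ℝ^d`). -/
def coneOf {d n : ℕ} (V : Fin n → Fin d → ℤ) : Set (Fin d → ℝ) :=
  {x | ∃ a : Fin n → ℝ, (∀ i, 0 ≤ a i) ∧ x = ∑ i, a i • rVec (V i)}

/-- The standing hypotheses on the generators: pairwise distinct, nonzero, primitive,
a minimal generating system of the cone, and the cone is strongly convex. -/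
def GoodGens {d n : ℕ} (V : Fin n → Fin d → ℤ) : Prop :=
  Function.Injective V ∧
  (∀ i, V i ≠ 0) ∧
  (∀ i, Finset.univ.gcd (V i) = 1) ∧
  (∀ i, ¬ ∃ a : Fin n → ℝ, (∀ j, 0 ≤ a j) ∧ a i = 0 ∧
      rVec (V i) = ∑ j, a j • rVec (V j)) ∧
  (∀ x ∈ coneOf V, -x ∈ coneOf V → x = 0)

/-- `A_V^T` as a linear map `ℤ^d → ℤ^n`; the `i`-th coordinate of `A_V^T y` is `⟨v_i, y⟩`. -/
def ATZ {d n : ℕ} (V : Fin n → Fin d → ℤ) : (Fin d → ℤ) →ₗ[ℤ] (Fin n → ℤ) :=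
  Matrix.mulVecLin (Matrix.of fun i j => V i j)

/-- `A_V^T` as a linear map `ℝ^d → ℝ^n`. -/
noncomputable def ATR {d n : ℕ} (V : Fin n → Fin d → ℤ) :
    (Fin d → ℝ) →ₗ[ℝ] (Fin n → ℝ) :=
  Matrix.mulVecLin (Matrix.of fun i j => (V i j : ℝ))

/-- A coset of `ℤ^n / A_V^T ℤ^d` is conic if it has a representative of the form
`⌈A_V^T y⌉` for some real `y`. -/
def IsConic {d n : ℕ} (V : Fin n → Fin d → ℤ)
    (α : (Fin n → ℤ) ⧸ LinearMap.range (ATZ V)) : Prop :=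
  ∃ a : Fin n → ℤ, Submodule.Quotient.mk a = α ∧
    ∃ y : Fin d → ℝ, ∀ i, a i = ⌈∑ j, (V i j : ℝ) * y j⌉

variable {d n : ℕ} (V : Fin n → Fin d → ℤ)

lemma ATR_apply (y : Fin d → ℝ) (i : Fin n) : ATR V y i = ∑ j, (V i j : ℝ) * y j := by
  simp [ATR, Matrix.mulVecLin, Matrix.mulVec, dotProduct]

lemma ATZ_apply (z : Fin d → ℤ) (i : Fin n) : ATZ V z i = ∑ j, V i j * z j := by
  simp [ATZ, Matrix.mulVecLin, Matrix.mulVec, dotProduct]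

noncomputable def castZR (n : ℕ) : (Fin n → ℤ) →ₗ[ℤ] (Fin n → ℝ) where
  toFun a := fun i => (a i : ℝ)
  map_add' a b := by ext i; simp
  map_smul' c a := by ext i; simp [zsmul_eq_mul]

lemma cast_ATZ (z : Fin d → ℤ) : castZR n (ATZ V z) = ATR V (fun j => (z j : ℝ)) := by
  ext i
  simp only [castZR, LinearMap.coe_mk, AddHom.coe_mk, ATZ_apply, ATR_apply]
  push_cast
  rfl

noncomputable def psiR : (Fin n → ℤ) →ₗ[ℤ] ((Fin n → ℝ) ⧸ LinearMap.range (ATR V)) :=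
  (((LinearMap.range (ATR V)).mkQ).restrictScalars ℤ).comp (castZR n)

lemma psiR_apply (a : Fin n → ℤ) :
    psiR V a = (LinearMap.range (ATR V)).mkQ (fun i => (a i : ℝ)) := rfl

lemma range_le_ker : LinearMap.range (ATZ V) ≤ LinearMap.ker (psiR V) := by
  rintro x ⟨z, rfl⟩
  simp only [LinearMap.mem_ker, psiR_apply]
  have : (fun i => ((ATZ V z i : ℤ) : ℝ)) = ATR V (fun j => (z j : ℝ)) := cast_ATZ V z
  rw [show (fun i => ((ATZ V z) i : ℝ)) = ATR V (fun j => (z j : ℝ)) from this]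
  simp [Submodule.Quotient.mk_eq_zero]

noncomputable def phiG : ((Fin n → ℤ) ⧸ LinearMap.range (ATZ V)) →ₗ[ℤ]
    ((Fin n → ℝ) ⧸ LinearMap.range (ATR V)) :=
  Submodule.liftQ _ (psiR V) (range_le_ker V)

lemma phiG_mk (a : Fin n → ℤ) :
    phiG V (Submodule.Quotient.mk a) = (LinearMap.range (ATR V)).mkQ (fun i => (a i : ℝ)) := rfl


lemma conic_iff (a : Fin n → ℤ) :
    IsConic V (Submodule.Quotient.mk a) ↔
      (LinearMap.range (ATR V)).mkQ (fun i => (a i : ℝ)) ∈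
        (LinearMap.range (ATR V)).mkQ '' {x : Fin n → ℝ | ∀ i, x i ∈ Set.Ico (0:ℝ) 1} := by
  constructor
  · rintro ⟨b, hb, y, hby⟩
    refine ⟨fun i => (b i : ℝ) - ∑ j, (V i j : ℝ) * y j, fun i => ?_, ?_⟩
    · rw [Set.mem_Ico]
      have h1 := Int.le_ceil (∑ j, (V i j : ℝ) * y j)
      have h2 := Int.ceil_lt_add_one (∑ j, (V i j : ℝ) * y j)
      rw [← hby i] at h1 h2
      constructor
      · show (0:ℝ) ≤ (b i : ℝ) - ∑ j, (V i j : ℝ) * y j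
        linarith
      · show (b i : ℝ) - ∑ j, (V i j : ℝ) * y j < 1
        linarith
    · -- mkQ of the fractional part equals mkQ (cast a)
      rw [Submodule.mkQ_apply, Submodule.mkQ_apply, Submodule.Quotient.eq]
      -- (fun i => b i - t i) - (cast a) ∈ range ATR
      have hba : Submodule.Quotient.mk (p := LinearMap.range (ATZ V)) (b - a) = 0 := by
        rw [Submodule.Quotient.mk_sub, hb, sub_self]
      rw [Submodule.Quotient.mk_eq_zero] at hba
      obtain ⟨z, hz⟩ := hba
      refine ⟨(fun j => -(y j) + (z j : ℝ)), ?_⟩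
      ext i
      have hzi : (((b - a) i : ℤ) : ℝ) = ATR V (fun j => (z j : ℝ)) i := by
        rw [← hz]; exact congrFun (cast_ATZ V z) i
      rw [ATR_apply] at hzi ⊢
      simp only [Pi.sub_apply, Int.cast_sub] at hzi
      simp only [Pi.sub_apply]
      have hsplit : ∑ j, (V i j : ℝ) * (-(y j) + (z j : ℝ)) =
          -(∑ j, (V i j : ℝ) * y j) + ∑ j, (V i j : ℝ) * (z j : ℝ) := by
        rw [← Finset.sum_neg_distrib, ← Finset.sum_add_distrib]
        exact Finset.sum_congr rfl fun j _ => by ring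
      rw [hsplit]
      linarith [hzi]
  · rintro ⟨x, hx, hxa⟩
    rw [Submodule.mkQ_apply, Submodule.mkQ_apply, Submodule.Quotient.eq] at hxa
    obtain ⟨y, hy⟩ := hxa
    refine ⟨a, rfl, fun j => -(y j), fun i => ?_⟩
    have hyi : ∑ j, (V i j : ℝ) * y j = x i - (a i : ℝ) := by
      have := congrFun hy i
      rw [ATR_apply] at this
      simpa using this
    have hneg : ∑ j, (V i j : ℝ) * (-(y j)) = (a i : ℝ) - x i := by
      have : ∑ j, (V i j : ℝ) * (-(y j)) = -(∑ j, (V i j : ℝ) * y j) := by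
        rw [← Finset.sum_neg_distrib]
        exact Finset.sum_congr rfl fun j _ => by ring
      rw [this, hyi]; ring
    obtain ⟨hx0, hx1⟩ := Set.mem_Ico.mp (hx i)
    symm
    rw [Int.ceil_eq_iff, hneg]
    constructor <;> push_cast <;> linarith

lemma exists_rat_solution (a : Fin n → ℤ) (y : Fin d → ℝ)
    (h : ∀ i, (a i : ℝ) = ∑ j, (V i j : ℝ) * y j) :
    ∃ q : Fin d → ℚ, ∀ i, (a i : ℚ) = ∑ j, (V i j : ℚ) * q j := by
  set M : Matrix (Fin n) (Fin d) ℚ := Matrix.of fun i j => (V i j : ℚ) with hM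
  set U : Submodule ℚ (Fin n → ℚ) := LinearMap.range (Matrix.mulVecLin M) with hU
  have hmem : (fun i => (a i : ℚ)) ∈ U := by
    rw [← Subspace.dualAnnihilator_dualCoannihilator_eq (W := U),
      Submodule.mem_dualCoannihilator]
    intro φ hφ
    rw [Submodule.mem_dualAnnihilator] at hφ
    set c : Fin n → ℚ := fun i => φ (Pi.single i 1) with hc
    have hφeq : ∀ x : Fin n → ℚ, φ x = ∑ i, x i * c i := by
      intro x
      have := LinearMap.pi_apply_eq_sum_univ φ x
      rw [this]
      refine Finset.sum_congr rfl fun i _ => ?_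
      rw [smul_eq_mul, hc]
      congr 1
      congr 1
      ext j
      simp [Pi.single_apply, eq_comm]
    have hcol : ∀ j, ∑ i, c i * (V i j : ℚ) = 0 := by
      intro j
      have hmemU : (fun i => (V i j : ℚ)) ∈ U := by
        refine ⟨Pi.single j 1, ?_⟩
        ext i
        simp [Matrix.mulVecLin, Matrix.mulVec_single, hM]
      have := hφ _ hmemU
      rw [hφeq] at this
      rw [← this]
      exact Finset.sum_congr rfl fun i _ => by ring
    have hreal : ∑ i, (c i : ℝ) * (a i : ℝ) = 0 := by
      calc ∑ i, (c i : ℝ) * (a i : ℝ) = ∑ i, (c i : ℝ) * ∑ j, (V i j : ℝ) * y j := by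
            exact Finset.sum_congr rfl fun i _ => by rw [h i]
        _ = ∑ i, ∑ j, (c i : ℝ) * (V i j : ℝ) * y j := by
            exact Finset.sum_congr rfl fun i _ => by rw [Finset.mul_sum]; exact Finset.sum_congr rfl fun j _ => by ring
        _ = ∑ j, ∑ i, (c i : ℝ) * (V i j : ℝ) * y j := Finset.sum_comm
        _ = ∑ j, (∑ i, (c i : ℝ) * (V i j : ℝ)) * y j := by
            exact Finset.sum_congr rfl fun j _ => by rw [Finset.sum_mul]
        _ = 0 := by
            refine Finset.sum_eq_zero fun j _ => ?_
            have : ∑ i, (c i : ℝ) * (V i j : ℝ) = ((∑ i, c i * (V i j : ℚ) : ℚ) : ℝ) := by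
              push_cast; rfl
            rw [this, hcol j]
            simp
    have hrat : ∑ i, c i * (a i : ℚ) = 0 := by
      have : ((∑ i, c i * (a i : ℚ) : ℚ) : ℝ) = 0 := by push_cast; convert hreal using 1
      exact_mod_cast this
    rw [hφeq]
    rw [← hrat]
    exact Finset.sum_congr rfl fun i _ => by ring
  obtain ⟨q, hq⟩ := hmem
  refine ⟨q, fun i => ?_⟩
  have := congrFun hq i
  simp [Matrix.mulVecLin, Matrix.mulVec, dotProduct, hM] at this
  rw [← this]

lemma torsion_iff_ker (α : (Fin n → ℤ) ⧸ LinearMap.range (ATZ V)) :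
    IsOfFinAddOrder α ↔ phiG V α = 0 := by
  obtain ⟨a, rfl⟩ := Submodule.Quotient.mk_surjective _ α
  constructor
  · intro h
    obtain ⟨k, hk, hka⟩ := isOfFinAddOrder_iff_nsmul_eq_zero.mp h
    have hmk : Submodule.Quotient.mk (p := LinearMap.range (ATZ V)) (k • a) = 0 := by
      rw [← Submodule.mkQ_apply, map_nsmul, Submodule.mkQ_apply, hka]
    rw [Submodule.Quotient.mk_eq_zero] at hmk
    obtain ⟨z, hz⟩ := hmk
    rw [phiG_mk, Submodule.mkQ_apply, Submodule.Quotient.mk_eq_zero]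
    refine ⟨fun j => (z j : ℝ) / k, ?_⟩
    ext i
    rw [ATR_apply]
    have hzi : ((ATZ V z) i : ℝ) = (k : ℝ) * (a i : ℝ) := by
      rw [hz]; push_cast; simp
    rw [ATZ_apply] at hzi
    push_cast at hzi
    have hk0 : (k : ℝ) ≠ 0 := Nat.cast_ne_zero.mpr hk.ne'
    have : ∑ j, (V i j : ℝ) * ((z j : ℝ) / k) = (∑ j, (V i j : ℝ) * (z j : ℝ)) / k := by
      rw [Finset.sum_div]
      exact Finset.sum_congr rfl fun j _ => by ring
    rw [this, hzi]
    field_simp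
  · intro h
    rw [phiG_mk, Submodule.mkQ_apply, Submodule.Quotient.mk_eq_zero] at h
    obtain ⟨y, hy⟩ := h
    have hco : ∀ i, (a i : ℝ) = ∑ j, (V i j : ℝ) * y j := by
      intro i
      have := congrFun hy i
      rw [ATR_apply] at this
      exact this.symm
    obtain ⟨q, hq⟩ := exists_rat_solution V a y hco
    set k : ℕ := ∏ j, (q j).den with hkdef
    have hkpos : 0 < k := Finset.prod_pos fun j _ => (q j).pos
    -- integer vector z with (z j : ℚ) = k * q j
    have hz : ∀ j : Fin d, ∃ zj : ℤ, (zj : ℚ) = (k : ℚ) * q j := by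
      intro j
      have hdvd : (q j).den ∣ k := Finset.dvd_prod_of_mem _ (Finset.mem_univ j)
      refine ⟨(q j).num * ((k / (q j).den : ℕ) : ℤ), ?_⟩
      have hden0 : ((q j).den : ℚ) ≠ 0 := by exact_mod_cast (q j).den_nz
      have h1 : ((((k / (q j).den : ℕ)) : ℤ) : ℚ) = (k : ℚ) / ((q j).den : ℚ) := by
        rw [Int.cast_natCast, Nat.cast_div hdvd hden0]
      rw [Int.cast_mul, h1,
        show ((q j).num : ℚ) = q j * (q j).den from
          (div_eq_iff hden0).mp (Rat.num_div_den (q j))]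
      field_simp
    choose z hzq using hz
    have hZa : ATZ V z = (k : ℤ) • a := by
      ext i
      have : ((ATZ V z) i : ℚ) = (((k : ℤ) • a) i : ℚ) := by
        rw [ATZ_apply]
        push_cast
        rw [show ∑ j, (V i j : ℚ) * (z j : ℚ) = ∑ j, (V i j : ℚ) * ((k : ℚ) * q j) from
          Finset.sum_congr rfl fun j _ => by rw [hzq j]]
        rw [show ∑ j, (V i j : ℚ) * ((k : ℚ) * q j) = (k : ℚ) * ∑ j, (V i j : ℚ) * q j from by
          rw [Finset.mul_sum]; exact Finset.sum_congr rfl fun j _ => by ring]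
        rw [← hq i]
        simp
      exact_mod_cast this
    refine isOfFinAddOrder_iff_nsmul_eq_zero.mpr ⟨k, hkpos, ?_⟩
    have hmn : (k : ℕ) • Submodule.Quotient.mk (p := LinearMap.range (ATZ V)) a =
        Submodule.Quotient.mk (k • a) := by
      rw [← Submodule.mkQ_apply, ← map_nsmul, Submodule.mkQ_apply]
    rw [hmn, Submodule.Quotient.mk_eq_zero]
    refine ⟨z, ?_⟩
    rw [hZa]
    ext i
    simp [zsmul_eq_mul]

noncomputable def Cbound : ℤ := 1 + ∑ i, ∑ j, |V i j|

lemma abs_sum_le (f : Fin d → ℝ) (hf : ∀ j, |f j| ≤ 1) (i : Fin n) :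
    |∑ j, (V i j : ℝ) * f j| ≤ ((Cbound V : ℤ) : ℝ) - 1 := by
  have h1 : |∑ j, (V i j : ℝ) * f j| ≤ ∑ j, |(V i j : ℝ)| := by
    refine (Finset.abs_sum_le_sum_abs _ _).trans (Finset.sum_le_sum fun j _ => ?_)
    rw [abs_mul]
    exact mul_le_of_le_one_right (abs_nonneg _) (hf j)
  have h2 : ∑ j, |(V i j : ℝ)| ≤ ∑ i, ∑ j, |(V i j : ℝ)| := by
    refine Finset.single_le_sum (f := fun i => ∑ j, |(V i j : ℝ)|) (fun i _ => ?_) (Finset.mem_univ i)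
    exact Finset.sum_nonneg fun j _ => abs_nonneg _
  have h3 : ∑ i, ∑ j, |(V i j : ℝ)| = ((Cbound V : ℤ) : ℝ) - 1 := by
    rw [Cbound]
    push_cast
    ring
  linarith

lemma ceil_bound (f : Fin d → ℝ) (hf : ∀ j, |f j| ≤ 1) (i : Fin n) :
    |⌈∑ j, (V i j : ℝ) * f j⌉| ≤ Cbound V := by
  set t := ∑ j, (V i j : ℝ) * f j with ht
  have habs := abs_sum_le V f hf i
  rw [abs_le] at habs ⊢
  constructor
  · have : ((-(Cbound V) : ℤ) : ℝ) ≤ (⌈t⌉ : ℝ) := by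
      push_cast
      have := Int.le_ceil t
      linarith [habs.1]
    exact_mod_cast this
  · rw [Int.ceil_le]
    push_cast
    linarith [habs.2]

lemma Bset_finite : {b : Fin n → ℤ | ∀ i, |b i| ≤ Cbound V}.Finite := by
  have hsub : {b : Fin n → ℤ | ∀ i, |b i| ≤ Cbound V} ⊆
      Set.pi Set.univ (fun _ : Fin n => Set.Icc (-(Cbound V)) (Cbound V)) := by
    intro b hb i _
    rw [Set.mem_Icc]
    exact abs_le.mp (hb i)
  exact (Set.Finite.pi (fun _ => Set.finite_Icc _ _)).subset hsub

lemma conic_subset_image :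
    {α : (Fin n → ℤ) ⧸ LinearMap.range (ATZ V) | IsConic V α} ⊆
      Submodule.Quotient.mk '' {b : Fin n → ℤ | ∀ i, |b i| ≤ Cbound V} := by
  rintro α ⟨b₀, hb₀, y, hby⟩
  set z : Fin d → ℤ := fun j => ⌊y j⌋ with hzdef
  refine ⟨b₀ - ATZ V z, fun i => ?_, ?_⟩
  · have hbi : (b₀ - ATZ V z) i = ⌈∑ j, (V i j : ℝ) * Int.fract (y j)⌉ := by
      have : ∑ j, (V i j : ℝ) * Int.fract (y j)
          = (∑ j, (V i j : ℝ) * y j) - (((ATZ V z) i : ℤ) : ℝ) := by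
        rw [ATZ_apply]
        push_cast
        rw [← Finset.sum_sub_distrib]
        exact Finset.sum_congr rfl fun j _ => by rw [Int.fract]; ring
      rw [this, Int.ceil_sub_intCast, ← hby i]
      simp
    rw [hbi]
    exact ceil_bound V _ (fun j => by
      rw [abs_le]
      constructor
      · linarith [Int.fract_nonneg (y j)]
      · linarith [Int.fract_lt_one (y j)]) i
  · rw [Submodule.Quotient.mk_sub, ← hb₀]
    have : Submodule.Quotient.mk (p := LinearMap.range (ATZ V)) (ATZ V z) = 0 :=
      (Submodule.Quotient.mk_eq_zero _).mpr ⟨z, rfl⟩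
    rw [this, sub_zero]

lemma conic_finite : {α : (Fin n → ℤ) ⧸ LinearMap.range (ATZ V) | IsConic V α}.Finite :=
  ((Bset_finite V).image _).subset (conic_subset_image V)

lemma S_subset :
    ((LinearMap.range (ATR V)).mkQ '' {x : Fin n → ℝ | ∀ i, x i ∈ Set.Ico (0:ℝ) 1} ∩
      Set.range (fun a : Fin n → ℤ => (LinearMap.range (ATR V)).mkQ fun i => (a i : ℝ))) ⊆
    (fun b : Fin n → ℤ => (LinearMap.range (ATR V)).mkQ fun i => (b i : ℝ)) ''
      {b : Fin n → ℤ | ∀ i, |b i| ≤ Cbound V} := by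
  rintro s ⟨⟨x, hx, hxs⟩, ⟨a, has⟩⟩
  have hax : (LinearMap.range (ATR V)).mkQ (fun i => (a i : ℝ)) =
      (LinearMap.range (ATR V)).mkQ x := has.trans hxs.symm
  rw [Submodule.mkQ_apply, Submodule.mkQ_apply, Submodule.Quotient.eq] at hax
  obtain ⟨y, hy⟩ := hax
  set z : Fin d → ℤ := fun j => ⌊y j⌋ with hzdef
  set b : Fin n → ℤ := a - ATZ V z with hbdef
  have hcb : ∀ i, (b i : ℝ) = x i + ∑ j, (V i j : ℝ) * Int.fract (y j) := by
    intro i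
    have hyi := congrFun hy i
    rw [ATR_apply] at hyi
    simp only [Pi.sub_apply] at hyi
    have hzi : ((ATZ V z) i : ℝ) = ∑ j, (V i j : ℝ) * (z j : ℝ) := by
      rw [ATZ_apply]; push_cast; rfl
    have : ∑ j, (V i j : ℝ) * Int.fract (y j)
        = (∑ j, (V i j : ℝ) * y j) - ∑ j, (V i j : ℝ) * (z j : ℝ) := by
      rw [← Finset.sum_sub_distrib]
      exact Finset.sum_congr rfl fun j _ => by rw [Int.fract]; ring
    rw [this]
    simp only [hbdef, Pi.sub_apply]
    push_cast
    rw [hzi] at *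
    linarith [hyi]
  refine ⟨b, fun i => ?_, ?_⟩
  · have hfr : |∑ j, (V i j : ℝ) * Int.fract (y j)| ≤ ((Cbound V : ℤ) : ℝ) - 1 :=
      abs_sum_le V _ (fun j => by
        rw [abs_le]
        constructor
        · linarith [Int.fract_nonneg (y j)]
        · linarith [Int.fract_lt_one (y j)]) i
    obtain ⟨hx0, hx1⟩ := Set.mem_Ico.mp (hx i)
    have : |(b i : ℝ)| ≤ ((Cbound V : ℤ) : ℝ) := by
      rw [hcb i]
      rw [abs_le] at hfr ⊢
      constructor <;> [linarith [hfr.1]; linarith [hfr.2]]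
    rw [← Int.cast_abs] at this
    exact_mod_cast this
  · show (LinearMap.range (ATR V)).mkQ (fun i => (b i : ℝ)) = s
    rw [← hxs, Submodule.mkQ_apply, Submodule.mkQ_apply, Submodule.Quotient.eq]
    refine ⟨fun j => Int.fract (y j), ?_⟩
    ext i
    rw [ATR_apply]
    simp only [Pi.sub_apply]
    rw [hcb i]
    ring

lemma S_finite :
    ((LinearMap.range (ATR V)).mkQ '' {x : Fin n → ℝ | ∀ i, x i ∈ Set.Ico (0:ℝ) 1} ∩
      Set.range (fun a : Fin n → ℤ =>
        (LinearMap.range (ATR V)).mkQ fun i => (a i : ℝ))).Finite :=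
  ((Bset_finite V).image _).subset (S_subset V)

lemma conic_eq_preimage :
    {α : (Fin n → ℤ) ⧸ LinearMap.range (ATZ V) | IsConic V α} =
      phiG V ⁻¹'
        ((LinearMap.range (ATR V)).mkQ '' {x : Fin n → ℝ | ∀ i, x i ∈ Set.Ico (0:ℝ) 1} ∩
          Set.range (fun a : Fin n → ℤ =>
            (LinearMap.range (ATR V)).mkQ fun i => (a i : ℝ))) := by
  ext α
  obtain ⟨a, rfl⟩ := Submodule.Quotient.mk_surjective _ α
  simp only [Set.mem_setOf_eq, Set.mem_preimage, Set.mem_inter_iff]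
  rw [conic_iff, phiG_mk]
  constructor
  · intro h
    exact ⟨h, ⟨a, rfl⟩⟩
  · intro h
    exact h.1

lemma card_eq_aux :
    {α : (Fin n → ℤ) ⧸ LinearMap.range (ATZ V) | IsConic V α}.ncard =
      ((LinearMap.range (ATR V)).mkQ '' {x : Fin n → ℝ | ∀ i, x i ∈ Set.Ico (0:ℝ) 1} ∩
        Set.range (fun a : Fin n → ℤ =>
          (LinearMap.range (ATR V)).mkQ fun i => (a i : ℝ))).ncard *
      Nat.card {β : (Fin n → ℤ) ⧸ LinearMap.range (ATZ V) // phiG V β = 0} := by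
  classical
  set S := ((LinearMap.range (ATR V)).mkQ '' {x : Fin n → ℝ | ∀ i, x i ∈ Set.Ico (0:ℝ) 1} ∩
      Set.range (fun a : Fin n → ℤ =>
        (LinearMap.range (ATR V)).mkQ fun i => (a i : ℝ))) with hSdef
  have hSsub : ∀ s : S, ∃ β, phiG V β = (s : _) := by
    rintro ⟨s, -, a, rfl⟩
    exact ⟨Submodule.Quotient.mk a, phiG_mk V a⟩
  choose σ hσ using hSsub
  have e : ↥(phiG V ⁻¹' S) ≃
      ↥S × {β : (Fin n → ℤ) ⧸ LinearMap.range (ATZ V) // phiG V β = 0} :=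
  { toFun := fun x => (⟨phiG V x.1, x.2⟩,
      ⟨x.1 - σ ⟨phiG V x.1, x.2⟩, by rw [map_sub, hσ]; exact sub_self _⟩)
    invFun := fun p => ⟨σ p.1 + p.2.1, by
      show phiG V _ ∈ S
      rw [map_add, hσ, p.2.2, add_zero]
      exact p.1.2⟩
    left_inv := fun x => by
      apply Subtype.ext
      show σ _ + (x.1 - σ _) = x.1
      abel
    right_inv := fun p => by
      obtain ⟨⟨s, hs⟩, ⟨k, hk⟩⟩ := p
      have h1 : phiG V (σ ⟨s, hs⟩ + k) = s := by rw [map_add, hσ, hk, add_zero]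
      have h2 : (⟨phiG V (σ ⟨s, hs⟩ + k), by rw [h1]; exact hs⟩ : ↥S) = ⟨s, hs⟩ :=
        Subtype.ext h1
      refine Prod.ext ?_ ?_
      · exact Subtype.ext h1
      · apply Subtype.ext
        show σ ⟨s, hs⟩ + k - σ _ = k
        rw [show (⟨phiG V (σ ⟨s, hs⟩ + k), _⟩ : ↥S) = ⟨s, hs⟩ from Subtype.ext h1]
        abel }
  rw [conic_eq_preimage, ← hSdef]
  rw [← Nat.card_coe_set_eq, ← Nat.card_coe_set_eq]
  rw [Nat.card_congr e, Nat.card_prod]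

theorem conic_classes_via_quotient
    (d n : ℕ) (hd : 1 ≤ d) (hn : 1 ≤ n)
    (V : Fin n → Fin d → ℤ) (hV : GoodGens V) :
    (∀ a : Fin n → ℤ,
      IsConic V (Submodule.Quotient.mk a) ↔
        (LinearMap.range (ATR V)).mkQ (fun i => (a i : ℝ)) ∈
          (LinearMap.range (ATR V)).mkQ '' {x : Fin n → ℝ | ∀ i, x i ∈ Set.Ico (0:ℝ) 1}) ∧
    {α : (Fin n → ℤ) ⧸ LinearMap.range (ATZ V) | IsConic V α}.Finite ∧
    ((LinearMap.range (ATR V)).mkQ '' {x : Fin n → ℝ | ∀ i, x i ∈ Set.Ico (0:ℝ) 1} ∩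
      Set.range (fun a : Fin n → ℤ =>
        (LinearMap.range (ATR V)).mkQ fun i => (a i : ℝ))).Finite ∧
    {α : (Fin n → ℤ) ⧸ LinearMap.range (ATZ V) | IsConic V α}.ncard =
      ((LinearMap.range (ATR V)).mkQ '' {x : Fin n → ℝ | ∀ i, x i ∈ Set.Ico (0:ℝ) 1} ∩
        Set.range (fun a : Fin n → ℤ =>
          (LinearMap.range (ATR V)).mkQ fun i => (a i : ℝ))).ncard *
      Nat.card (AddCommGroup.torsion ((Fin n → ℤ) ⧸ LinearMap.range (ATZ V))) := by
  refine ⟨fun a => conic_iff V a, conic_finite V, S_finite V, ?_⟩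
  rw [card_eq_aux V]
  congr 1
  exact Nat.card_congr (Equiv.subtypeEquivRight fun β =>
    (torsion_iff_ker V β).symm.trans (AddCommGroup.mem_torsion β).symm)
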